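/- Let < be a right-order on a group G, C a subgroup of G, and a ∈ G with a ≠ 1 and C ∩ ⟨a⟩ = {1}. Suppose a normalizes C and conjugation by a and by a⁻¹ preserves the order < on C. Then the subgroup H = ⟨C, a⟩ admits a discrete right-order ≺ with a as minimal positive element, and ≺ agrees with < on C. -/

import Mathlib

variable {G : Type*} [Group G]

/-- A right order on a group: a strict total order invariant under right multiplication. -/
def IsRightOrder (r : G → G → Prop) : Prop :=
  IsStrictTotalOrder G r ∧ ∀ f g h : G, r f g → r (f * h) (g * h)

/-- `a` is the least element greater than the identity for the order `r`. -/
def LeastPos (r : G → G → Prop) (a : G) : Prop :=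
  r 1 a ∧ ∀ g : G, r 1 g → g = a ∨ r a g

theorem stmt10 (r : G → G → Prop) (hr : IsRightOrder r)
    (C : Subgroup G) (a : G) (ha : a ≠ 1)
    (hint : C ⊓ Subgroup.zpowers a = ⊥)
    (hnorm : ∀ c ∈ C, a * c * a⁻¹ ∈ C)
    (hnorm' : ∀ c ∈ C, a⁻¹ * c * a ∈ C)
    (hconj : ∀ c ∈ C, ∀ c' ∈ C, (r c c' ↔ r (a * c * a⁻¹) (a * c' * a⁻¹)))
    (hconj' : ∀ c ∈ C, ∀ c' ∈ C, (r c c' ↔ r (a⁻¹ * c * a) (a⁻¹ * c' * a))) :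
    ∃ s : (C ⊔ Subgroup.zpowers a : Subgroup G) → (C ⊔ Subgroup.zpowers a : Subgroup G) → Prop,
      IsRightOrder s ∧
      LeastPos s ⟨a, Subgroup.mem_sup_right (Subgroup.mem_zpowers a)⟩ ∧
      ∀ (c c' : G) (hc : c ∈ C) (hc' : c' ∈ C),
        (s ⟨c, Subgroup.mem_sup_left hc⟩ ⟨c', Subgroup.mem_sup_left hc'⟩ ↔ r c c') := by
  obtain ⟨hsto, hmul⟩ := hr
  haveI : IsStrictTotalOrder G r := hsto
  have hirr : ∀ g : G, ¬ r g g := fun g => irrefl g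
  have htrans : ∀ x y z : G, r x y → r y z → r x z := fun x y z h1 h2 => _root_.trans h1 h2
  have htri : ∀ x y : G, r x y ∨ x = y ∨ r y x := fun x y => trichotomous x y
  -- positivity is a cone in C
  have hposmul : ∀ x y : G, r 1 x → r 1 y → r 1 (x * y) := by
    intro x y hx hy
    have := hmul 1 x y hx
    rw [one_mul] at this
    exact htrans _ _ _ hy this
  have hinvpos : ∀ x : G, r x 1 → r 1 x⁻¹ := by
    intro x hx
    have := hmul x 1 x⁻¹ hx
    simpa using this
  -- conjugation by all powers of a
  have hCa : ∀ m : ℤ, ∀ c ∈ C, a ^ m * c * a ^ (-m) ∈ C := by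
    intro m
    induction m using Int.induction_on with
    | zero => intro c hc; simpa using hc
    | succ k ih =>
      intro c hc
      have h1 := hnorm _ (ih c hc)
      have e : a * (a ^ (k : ℤ) * c * a ^ (-(k : ℤ))) * a⁻¹
          = a ^ ((k : ℤ) + 1) * c * a ^ (-((k : ℤ) + 1)) := by group
      rwa [e] at h1
    | pred k ih =>
      intro c hc
      have h1 := hnorm' _ (ih c hc)
      have e : a⁻¹ * (a ^ (-(k : ℤ)) * c * a ^ (-(-(k : ℤ)))) * a
          = a ^ (-(k : ℤ) - 1) * c * a ^ (-(-(k : ℤ) - 1)) := by group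
      rwa [e] at h1
  have hCr : ∀ m : ℤ, ∀ c ∈ C, ∀ c' ∈ C,
      (r c c' ↔ r (a ^ m * c * a ^ (-m)) (a ^ m * c' * a ^ (-m))) := by
    intro m
    induction m using Int.induction_on with
    | zero => intro c hc c' hc'; simp
    | succ k ih =>
      intro c hc c' hc'
      have e : ∀ x : G, a * (a ^ (k : ℤ) * x * a ^ (-(k : ℤ))) * a⁻¹
          = a ^ ((k : ℤ) + 1) * x * a ^ (-((k : ℤ) + 1)) := by intro x; group
      rw [ih c hc c' hc', hconj _ (hCa k c hc) _ (hCa k c' hc'), e, e]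
    | pred k ih =>
      intro c hc c' hc'
      have e : ∀ x : G, a⁻¹ * (a ^ (-(k : ℤ)) * x * a ^ (-(-(k : ℤ)))) * a
          = a ^ (-(k : ℤ) - 1) * x * a ^ (-(-(k : ℤ) - 1)) := by intro x; group
      rw [ih c hc c' hc', hconj' _ (hCa (-(k:ℤ)) c hc) _ (hCa (-(k:ℤ)) c' hc'), e, e]
  have hposconj : ∀ m : ℤ, ∀ c ∈ C, (r 1 c ↔ r 1 (a ^ m * c * a ^ (-m))) := by
    intro m c hc
    have := hCr m 1 (one_mem C) c hc
    simpa using this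
  -- torsion-freeness of a
  have hposn : ∀ b : G, r 1 b → ∀ k : ℕ, r 1 (b ^ (k + 1)) := by
    intro b hb k
    induction k with
    | zero => simpa using hb
    | succ k ih =>
      have h1 := hmul 1 (b ^ (k + 1)) b ih
      rw [one_mul, ← pow_succ] at h1
      exact htrans _ _ _ hb h1
  have haux : ∀ b : G, r 1 b → ∀ n : ℤ, 0 < n → b ^ n ≠ 1 := by
    intro b hb n hn he
    lift n to ℕ using le_of_lt hn
    rw [zpow_natCast] at he
    obtain ⟨k, rfl⟩ : ∃ k, n = k + 1 := ⟨n - 1, by omega⟩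
    have := hposn b hb k
    rw [he] at this
    exact hirr 1 this
  have htf : ∀ n : ℤ, n ≠ 0 → a ^ n ≠ 1 := by
    intro n hn he
    rcases htri 1 a with h | h | h
    · rcases lt_or_gt_of_ne hn with h2 | h2
      · exact haux a h (-n) (by omega) (by rw [zpow_neg, he, inv_one])
      · exact haux a h n h2 he
    · exact ha h.symm
    · have hb : r 1 a⁻¹ := hinvpos a h
      rcases lt_or_gt_of_ne hn with h2 | h2
      · exact haux a⁻¹ hb (-n) (by omega) (by rw [inv_zpow, zpow_neg, inv_inv, he])
      · exact haux a⁻¹ hb n h2 (by rw [inv_zpow, he, inv_one])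
  -- uniqueness of decomposition
  have huniq : ∀ (n m : ℤ) (c c' : G), c ∈ C → c' ∈ C → a ^ n * c = a ^ m * c' →
      n = m ∧ c = c' := by
    intro n m c c' hc hc' he
    have h2 : a ^ (-m + n) = c' * c⁻¹ := by
      calc a ^ (-m + n) = a ^ (-m) * (a ^ n * c) * c⁻¹ := by rw [zpow_add]; group
      _ = a ^ (-m) * (a ^ m * c') * c⁻¹ := by rw [he]
      _ = c' * c⁻¹ := by group
    have hmem : a ^ (-m + n) ∈ C ⊓ Subgroup.zpowers a :=
      Subgroup.mem_inf.mpr ⟨h2 ▸ C.mul_mem hc' (C.inv_mem hc),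
        Subgroup.zpow_mem _ (Subgroup.mem_zpowers a) _⟩
    rw [hint, Subgroup.mem_bot] at hmem
    have hnm : -m + n = 0 := by
      by_contra h0
      exact htf _ h0 hmem
    have hn : n = m := by omega
    refine ⟨hn, ?_⟩
    subst hn
    exact mul_left_cancel he
  -- existence of decomposition
  let K : Subgroup G :=
    { carrier := {g | ∃ n : ℤ, ∃ c, c ∈ C ∧ g = a ^ n * c}
      one_mem' := ⟨0, 1, one_mem C, by simp⟩
      mul_mem' := by
        rintro x y ⟨n, c, hc, rfl⟩ ⟨m, d, hd, rfl⟩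
        exact ⟨n + m, (a ^ (-m) * c * a ^ m) * d,
          mul_mem (by simpa using hCa (-m) c hc) hd, by rw [zpow_add]; group⟩
      inv_mem' := by
        rintro x ⟨n, c, hc, rfl⟩
        refine ⟨-n, a ^ n * c⁻¹ * a ^ (-n), ?_, by group⟩
        exact hCa n c⁻¹ (C.inv_mem hc) }
  have hexist : ∀ g ∈ (C ⊔ Subgroup.zpowers a : Subgroup G),
      ∃ n : ℤ, ∃ c, c ∈ C ∧ g = a ^ n * c := by
    intro g hg
    have hle : (C ⊔ Subgroup.zpowers a : Subgroup G) ≤ K := by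
      refine sup_le (fun c hc => ⟨0, c, hc, by simp⟩) ?_
      rw [Subgroup.zpowers_le]
      exact ⟨1, 1, one_mem C, by simp⟩
    exact hle hg
  -- the positive cone
  let P : G → Prop := fun g => ∃ n : ℤ, ∃ c, c ∈ C ∧ g = a ^ n * c ∧
    (r 1 c ∨ (c = 1 ∧ 0 < n))
  have hP1 : ¬ P 1 := by
    rintro ⟨n, c, hc, he, hpos⟩
    obtain ⟨hn, hcc⟩ := huniq n 0 c 1 hc (one_mem C) (by simpa using he.symm)
    subst hn; subst hcc
    rcases hpos with h | ⟨_, h⟩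
    · exact hirr 1 h
    · omega
  have hPmul : ∀ u v : G, P u → P v → P (u * v) := by
    rintro _ _ ⟨n, c, hc, rfl, h1⟩ ⟨m, d, hd, rfl, h2⟩
    have hc2 : a ^ (-m) * c * a ^ m ∈ C := by simpa using hCa (-m) c hc
    refine ⟨n + m, (a ^ (-m) * c * a ^ m) * d, mul_mem hc2 hd, by rw [zpow_add]; group, ?_⟩
    have hcpos : r 1 c → r 1 (a ^ (-m) * c * a ^ m) := by
      intro h
      have := (hposconj (-m) c hc).mp h
      simpa using this
    rcases h1 with h1 | ⟨rfl, hn⟩ <;> rcases h2 with h2 | ⟨rfl, hm⟩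
    · exact Or.inl (hposmul _ _ (hcpos h1) h2)
    · exact Or.inl (by simpa using hcpos h1)
    · exact Or.inl (by simpa using h2)
    · exact Or.inr ⟨by simp, by omega⟩
  have hPtot : ∀ g ∈ (C ⊔ Subgroup.zpowers a : Subgroup G), g ≠ 1 → P g ∨ P g⁻¹ := by
    intro g hg hg1
    obtain ⟨n, c, hc, rfl⟩ := hexist g hg
    rcases htri 1 c with h | h | h
    · exact Or.inl ⟨n, c, hc, rfl, Or.inl h⟩
    · subst h
      have hn : n ≠ 0 := by rintro rfl; simp at hg1
      rcases lt_or_gt_of_ne hn with h2 | h2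
      · refine Or.inr ⟨-n, 1, one_mem C, by group, Or.inr ⟨rfl, by omega⟩⟩
      · exact Or.inl ⟨n, 1, one_mem C, rfl, Or.inr ⟨rfl, h2⟩⟩
    · have hcinv : r 1 c⁻¹ := hinvpos c h
      refine Or.inr ⟨-n, a ^ n * c⁻¹ * a ^ (-n), hCa n c⁻¹ (inv_mem hc), by group,
        Or.inl ((hposconj n c⁻¹ (inv_mem hc)).mp hcinv)⟩
  -- assemble
  refine ⟨fun x y => P ((y : G) * (x : G)⁻¹),
    ⟨{ toTrichotomous := ⟨fun x y h1 h2 => (((?_ : ∀ x y : (C ⊔ Subgroup.zpowers a : Subgroup G),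
          P ((y : G) * (x : G)⁻¹) ∨ x = y ∨ P ((x : G) * (y : G)⁻¹)) x y).resolve_left h1).resolve_right h2⟩,
       toIsStrictOrder := { toIrrefl := ⟨?_⟩, toIsTrans := ⟨?_⟩ } },
      ?_⟩, ?_, ?_⟩
  · -- trichotomous
    intro x y
    by_cases hxy : x = y
    · exact Or.inr (Or.inl hxy)
    · have hne : (y : G) * (x : G)⁻¹ ≠ 1 := by
        intro h
        exact hxy (Subtype.ext (mul_inv_eq_one.mp h)).symm
      rcases hPtot _ (mul_mem y.2 (inv_mem x.2)) hne with h | h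
      · exact Or.inl h
      · refine Or.inr (Or.inr ?_)
        rwa [mul_inv_rev, inv_inv] at h
  · -- irrefl
    intro x h
    rw [mul_inv_cancel] at h
    exact hP1 h
  · -- trans
    intro x y z h1 h2
    have h3 := hPmul _ _ h2 h1
    have e : (z : G) * (y : G)⁻¹ * ((y : G) * (x : G)⁻¹) = (z : G) * (x : G)⁻¹ := by group
    rwa [e] at h3
  · -- right invariance
    intro f g h hfg
    have e : ((g * h : (C ⊔ Subgroup.zpowers a : Subgroup G)) : G) *
        ((f * h : (C ⊔ Subgroup.zpowers a : Subgroup G)) : G)⁻¹ = (g : G) * (f : G)⁻¹ := by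
      push_cast
      group
    show P _
    rw [e]
    exact hfg
  · -- LeastPos
    constructor
    · show P ((a : G) * ((1 : (C ⊔ Subgroup.zpowers a : Subgroup G)) : G)⁻¹)
      refine ⟨1, 1, one_mem C, by simp, Or.inr ⟨rfl, one_pos⟩⟩
    · intro g hg
      have hg' : P (g : G) := by simpa using hg
      obtain ⟨n, c, hc, he, hpos⟩ := hg'
      rcases hpos with h | ⟨rfl, hn⟩
      · refine Or.inr ?_
        show P ((g : G) * a⁻¹)
        refine ⟨n - 1, a * c * a⁻¹, hnorm c hc, by rw [he]; group, Or.inl ?_⟩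
        have := (hposconj 1 c hc).mp h
        simpa using this
      · rcases eq_or_ne n 1 with rfl | hn1
        · exact Or.inl (Subtype.ext (by rw [he]; simp))
        · refine Or.inr ?_
          show P ((g : G) * a⁻¹)
          refine ⟨n - 1, 1, one_mem C, by rw [he]; group, Or.inr ⟨rfl, by omega⟩⟩
  · -- agreement on C
    intro c c' hc hc'
    show P (c' * c⁻¹) ↔ r c c'
    constructor
    · rintro ⟨n, d, hd, he, hpos⟩
      obtain ⟨hn, hdd⟩ := huniq n 0 d (c' * c⁻¹) hd (mul_mem hc' (inv_mem hc)) (by rw [← he]; simp)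
      subst hn
      rcases hpos with h | ⟨_, h⟩
      · rw [hdd] at h
        have := hmul 1 (c' * c⁻¹) c h
        simpa using this
      · omega
    · intro h
      refine ⟨0, c' * c⁻¹, mul_mem hc' (inv_mem hc), by simp, Or.inl ?_⟩
      have := hmul c c' c⁻¹ h
      simpa using this
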